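/- For 1/2 < p < 1, there exists a unique real number t̂ ∈ (0, 2p-1) satisfying t̂ · log(p/(1-p)) = D_KL((1+t̂)/2 || p). -/

import Mathlib

/-- Bernoulli Kullback-Leibler divergence `D_KL(x || p)`. -/
noncomputable def klBer (x p : ℝ) : ℝ :=
  x * Real.log (x / p) + (1 - x) * Real.log ((1 - x) / (1 - p))

theorem stmt2 (p : ℝ) (hp : 1/2 < p) (hp1 : p < 1) :
    ∃! t : ℝ, t ∈ Set.Ioo 0 (2*p - 1) ∧
      t * Real.log (p / (1 - p)) = klBer ((1 + t)/2) p := by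
  have hp0 : (0:ℝ) < p := by linarith
  have hq0 : (0:ℝ) < 1 - p := by linarith
  set L := Real.log (p / (1 - p)) with hLdef
  have hL0 : 0 < L := Real.log_pos (by rw [lt_div_iff₀ hq0]; linarith)
  set b := 2*p - 1 with hbdef
  have hb0 : 0 < b := by simp [hbdef]; linarith
  have hb1 : b < 1 := by simp [hbdef]; linarith
  set G : ℝ → ℝ := fun t => t * L -
      (((1+t)/2) * Real.log ((1+t)/2) - ((1+t)/2) * Real.log p
        + ((1-t)/2) * Real.log ((1-t)/2) - ((1-t)/2) * Real.log (1-p)) with hGdef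
  -- On Icc 0 b, the equation is equivalent to G t = 0
  have hkl : ∀ t ∈ Set.Icc (0:ℝ) b, klBer ((1+t)/2) p =
      ((1+t)/2) * Real.log ((1+t)/2) - ((1+t)/2) * Real.log p
        + ((1-t)/2) * Real.log ((1-t)/2) - ((1-t)/2) * Real.log (1-p) := by
    intro t ht
    have hu : (0:ℝ) < (1+t)/2 := by nlinarith [ht.1]
    have hv : (0:ℝ) < (1-t)/2 := by nlinarith [ht.2, hb1]
    have h1 : 1 - (1+t)/2 = (1-t)/2 := by ring
    rw [klBer, h1, Real.log_div (ne_of_gt hu) (ne_of_gt hp0),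
      Real.log_div (ne_of_gt hv) (ne_of_gt hq0)]
    ring
  -- derivative of G
  have hderiv : ∀ t ∈ Set.Icc (0:ℝ) b, HasDerivAt G
      (L + (Real.log p - Real.log ((1+t)/2))/2
         + (Real.log ((1-t)/2) - Real.log (1-p))/2) t := by
    intro t ht
    have hu : (0:ℝ) < (1+t)/2 := by nlinarith [ht.1]
    have hv : (0:ℝ) < (1-t)/2 := by nlinarith [ht.2, hb1]
    have du : HasDerivAt (fun t : ℝ => (1+t)/2) (1/2) t := by
      simpa using ((hasDerivAt_id t).const_add 1).div_const 2
    have dv : HasDerivAt (fun t : ℝ => (1-t)/2) (-(1/2)) t := by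
      have := ((hasDerivAt_id t).const_sub 1).div_const 2
      refine this.congr_deriv ?_
      norm_num
    have d1 : HasDerivAt (fun t : ℝ => ((1+t)/2) * Real.log ((1+t)/2))
        ((Real.log ((1+t)/2) + 1) * (1/2)) t :=
      by have := (Real.hasDerivAt_mul_log (ne_of_gt hu)).comp t du; exact this
    have d2 : HasDerivAt (fun t : ℝ => ((1+t)/2) * Real.log p)
        ((1/2) * Real.log p) t := du.mul_const _
    have d3 : HasDerivAt (fun t : ℝ => ((1-t)/2) * Real.log ((1-t)/2))
        ((Real.log ((1-t)/2) + 1) * (-(1/2))) t :=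
      by have := (Real.hasDerivAt_mul_log (ne_of_gt hv)).comp t dv; exact this
    have d4 : HasDerivAt (fun t : ℝ => ((1-t)/2) * Real.log (1-p))
        ((-(1/2)) * Real.log (1-p)) t := dv.mul_const _
    have dL : HasDerivAt (fun t : ℝ => t * L) L t := by
      simpa using (hasDerivAt_id t).mul_const L
    have := dL.sub (((d1.sub d2).add d3).sub d4)
    refine this.congr_deriv ?_
    ring
  have hcont : ContinuousOn G (Set.Icc 0 b) := fun t ht =>
    (hderiv t ht).continuousAt.continuousWithinAt
  -- derivative is positive on the interior
  have hmono : StrictMonoOn G (Set.Icc 0 b) := by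
    apply strictMonoOn_of_deriv_pos (convex_Icc 0 b) hcont
    intro t ht
    rw [interior_Icc] at ht
    have ht' : t ∈ Set.Icc (0:ℝ) b := Set.mem_Icc_of_Ioo ht
    rw [(hderiv t ht').deriv]
    have hu : (0:ℝ) < (1+t)/2 := by nlinarith [ht.1]
    have h1 : Real.log ((1+t)/2) ≤ Real.log p :=
      Real.log_le_log hu (by nlinarith [ht.2])
    have h2 : Real.log (1-p) ≤ Real.log ((1-t)/2) :=
      Real.log_le_log hq0 (by nlinarith [ht.2])
    linarith
  -- endpoint values
  have hG0 : G 0 < 0 := by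
    have hpq : p * (1 - p) < 1/4 := by nlinarith
    have hlog : Real.log (p * (1-p)) < Real.log (1/4) :=
      Real.log_lt_log (by positivity) hpq
    rw [Real.log_mul (ne_of_gt hp0) (ne_of_gt hq0)] at hlog
    have h4 : Real.log (1/4 : ℝ) = 2 * Real.log (1/2 : ℝ) := by
      rw [show (1/4 : ℝ) = (1/2)*(1/2) by norm_num,
        Real.log_mul (by norm_num) (by norm_num)]
      ring
    have e1 : ((1+(0:ℝ))/2) = 1/2 := by norm_num
    have e2 : ((1-(0:ℝ))/2) = 1/2 := by norm_num
    have e : G 0 = (Real.log p + Real.log (1-p))/2 - Real.log (1/2) := by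
      simp only [hGdef, e1, e2]
      ring
    rw [e]
    linarith
  have hGb : 0 < G b := by
    have h1 : (1 + b)/2 = p := by rw [hbdef]; ring
    have h2 : (1 - b)/2 = 1 - p := by rw [hbdef]; ring
    simp only [hGdef, h1, h2]
    nlinarith
  -- existence via IVT
  obtain ⟨t, htmem, htval⟩ := intermediate_value_Ioo (le_of_lt hb0) hcont
    (Set.mem_Ioo.mpr ⟨hG0, hGb⟩)
  have key : ∀ s ∈ Set.Ioo (0:ℝ) b,
      (s * L = klBer ((1+s)/2) p ↔ G s = 0) := by
    intro s hs
    rw [hkl s (Set.mem_Icc_of_Ioo hs), hGdef]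
    constructor <;> intro h <;> linarith [h]
  refine ⟨t, ⟨htmem, (key t htmem).mpr htval⟩, ?_⟩
  rintro s ⟨hsmem, hsval⟩
  exact hmono.injOn (Set.mem_Icc_of_Ioo hsmem) (Set.mem_Icc_of_Ioo htmem)
    (by rw [(key s hsmem).mp hsval, htval])
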